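/- The Wagner graph has domination number exactly 3, and the graph obtained from the Wagner graph by adding one pendant vertex to each of its 8 vertices has the property that any set of 3 edges fails to dominate all edges (so the line graph of this graph has domination number at least 4). -/

import Mathlib

open SimpleGraph

variable {V : Type*}

/-- A graph is claw-free if it has no induced `K_{1,3}`. -/
def SimpleGraph.ClawFree (G : SimpleGraph V) : Prop :=
  ¬ ∃ (c a b d : V), ([c, a, b, d] : List V).Nodup ∧
    G.Adj c a ∧ G.Adj c b ∧ G.Adj c d ∧ ¬ G.Adj a b ∧ ¬ G.Adj a d ∧ ¬ G.Adj b d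

/-- `X` is a dominating set of `G`. -/
def SimpleGraph.IsDominatingSet (G : SimpleGraph V) (X : Set V) : Prop :=
  ∀ v : V, v ∈ X ∨ ∃ u ∈ X, G.Adj u v

/-- The domination number of `G` is at most `n`. -/
def SimpleGraph.dominationNumberLE (G : SimpleGraph V) (n : ℕ) : Prop :=
  ∃ X : Finset V, X.card ≤ n ∧ G.IsDominatingSet ↑X

/-- `G` is `k`-connected: it has at least `k+1` vertices and deleting any set of
fewer than `k` vertices leaves it connected. -/
def SimpleGraph.KConnected (G : SimpleGraph V) [Fintype V] (k : ℕ) : Prop :=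
  k + 1 ≤ Fintype.card V ∧
    ∀ S : Finset V, S.card < k → (G.induce ((↑S : Set V)ᶜ)).Connected

/-- `G` is hamiltonian-connected: any two distinct vertices are joined by a
hamiltonian path. -/
def SimpleGraph.HamiltonianConnected (G : SimpleGraph V) [DecidableEq V] : Prop :=
  ∀ u v : V, u ≠ v → ∃ p : G.Walk u v, p.IsHamiltonian



/-- A multigraph on vertex type `V` with edge type `E`: each edge is assigned an
unordered pair of endpoints (possibly equal, for loops). -/
structure Multigraph (V : Type*) (E : Type*) where
  inc : E → Sym2 V

namespace Multigraph

open scoped Classical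

variable {V E : Type*} {M : Multigraph V E}

/-- Walks in a multigraph. -/
inductive Walk (M : Multigraph V E) : V → V → Type _ where
  | nil (v : V) : Walk M v v
  | cons {u v w : V} (e : E) (h : M.inc e = s(u, v)) (p : Walk M v w) : Walk M u w

/-- The list of edges of a walk. -/
def Walk.edges : ∀ {u v : V}, M.Walk u v → List E
  | _, _, .nil _ => []
  | _, _, .cons e _ p => e :: p.edges

/-- The list of vertices visited by a walk, in order. -/
def Walk.support : ∀ {u v : V}, M.Walk u v → List V
  | _, v, .nil _ => [v]
  | u, _, .cons _ _ p => u :: p.support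

/-- A trail is a walk with no repeated edge. -/
def Walk.IsTrail {u v : V} (p : M.Walk u v) : Prop := p.edges.Nodup

/-- The interior vertices of a walk (all vertices except the two ends). -/
def Walk.interior {u v : V} (p : M.Walk u v) : List V := p.support.tail.dropLast

/-- Two vertices are reachable if joined by a walk. -/
def Reachable (M : Multigraph V E) (u v : V) : Prop := Nonempty (M.Walk u v)

/-- Reachability avoiding a set `R` of edges. -/
def ReachableOff (M : Multigraph V E) (R : Set E) (u v : V) : Prop :=
  ∃ p : M.Walk u v, ∀ e ∈ p.edges, e ∉ R

/-- A multigraph is connected if every two vertices are joined by a walk. -/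
def Connected (M : Multigraph V E) : Prop := ∀ u v : V, M.Reachable u v

/-- A multigraph is `k`-edge-connected if it stays connected after the removal of
any set of fewer than `k` edges. -/
def KEdgeConnected (M : Multigraph V E) (k : ℕ) : Prop :=
  ∀ R : Finset E, R.card < k → ∀ u v : V, M.ReachableOff (↑R) u v

/-- An edge-cut `R` is essential if after its removal two remaining edges lie in
different components. -/
def IsEssentialCut (M : Multigraph V E) (R : Finset E) : Prop :=
  ∃ (e f : E) (u v : V), e ∉ R ∧ f ∉ R ∧ u ∈ M.inc e ∧ v ∈ M.inc f ∧
    ¬ M.ReachableOff (↑R) u v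

/-- A multigraph is essentially `k`-edge-connected if every essential edge-cut has
size at least `k`. -/
def EssentiallyKEdgeConnected (M : Multigraph V E) (k : ℕ) : Prop :=
  ∀ R : Finset E, M.IsEssentialCut R → k ≤ R.card

/-- The line graph of a multigraph: vertices are the edges, adjacent when sharing
an endpoint. -/
def lineGraph (M : Multigraph V E) : SimpleGraph E where
  Adj e f := e ≠ f ∧ ∃ v : V, v ∈ M.inc e ∧ v ∈ M.inc f
  symm := by
    constructor
    rintro e f ⟨hne, v, hv1, hv2⟩
    exact ⟨hne.symm, v, hv2, hv1⟩
  loopless := by constructor; rintro e ⟨hne, -⟩; exact hne rfl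

/-- The degree of a vertex: the number of edge-ends at it (loops count twice). -/
noncomputable def degree (M : Multigraph V E) [Fintype E] (v : V) : ℕ :=
  ∑ e : E, Sym2.lift ⟨fun a b => (if a = v then 1 else 0) + (if b = v then 1 else 0),
    fun a b => by ring⟩ (M.inc e)

/-- A pendant edge: an edge with an endpoint of degree `1`. -/
def IsPendant (M : Multigraph V E) [Fintype E] (e : E) : Prop :=
  ∃ v : V, v ∈ M.inc e ∧ M.degree v = 1

/-- A closed trail whose vertex set dominates every edge. -/
def HasDominatingClosedTrail (M : Multigraph V E) : Prop :=
  ∃ (v : V) (p : M.Walk v v), p.IsTrail ∧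
    ∀ e : E, ∃ x : V, x ∈ M.inc e ∧ x ∈ p.support

/-- A closed trail through every vertex. -/
def HasSpanningClosedTrail (M : Multigraph V E) : Prop :=
  ∃ (v : V) (p : M.Walk v v), p.IsTrail ∧ ∀ x : V, x ∈ p.support

/-- An internally dominating `(e₁,e₂)`-trail: a trail with first edge `e₁` and last
edge `e₂` whose interior vertices dominate every edge. -/
def HasIDT (M : Multigraph V E) (e₁ e₂ : E) : Prop :=
  ∃ (u v : V) (p : M.Walk u v), p.IsTrail ∧
    p.edges.head? = some e₁ ∧ p.edges.getLast? = some e₂ ∧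
    ∀ e : E, ∃ x : V, x ∈ M.inc e ∧ x ∈ p.interior

end Multigraph


/-- The Wagner graph: the 8-cycle on `ZMod 8` together with the four main
diagonals (`i` is adjacent to `i ± 1` and to `i + 4`). -/
def wagner : SimpleGraph (ZMod 8) :=
  SimpleGraph.fromRel fun i j => j - i = 1 ∨ j - i = 4

/-- The graph obtained from the Wagner graph by adding one pendant edge at each of
its 8 vertices, as a multigraph: the original vertices are `Sum.inl i` and the
pendant leaves are `Sum.inr i`. -/
def wagnerPendant :
    Multigraph (ZMod 8 ⊕ ZMod 8) ({p : Sym2 (ZMod 8) // p ∈ wagner.edgeSet} ⊕ ZMod 8) where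
  inc e :=
    match e with
    | Sum.inl p => (p : Sym2 (ZMod 8)).map Sum.inl
    | Sum.inr i => s(Sum.inl i, Sum.inr i)

noncomputable instance :
    Fintype ({p : Sym2 (ZMod 8) // p ∈ wagner.edgeSet} ⊕ ZMod 8) :=
  Fintype.ofFinite _

noncomputable instance :
    DecidableEq ({p : Sym2 (ZMod 8) // p ∈ wagner.edgeSet} ⊕ ZMod 8) :=
  Classical.decEq _

instance : DecidableRel wagner.Adj := fun a b =>
  decidable_of_iff _ (SimpleGraph.fromRel_adj _ a b).symm

/-- The Wagner graph has domination number exactly `3`, and in the graph obtained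
from it by adding one pendant edge at each vertex, no set of at most `3` edges
dominates all edges: some edge shares an endpoint with none of them (hence the
line graph of that graph has domination number at least `4`). -/
theorem stmt18 :
    (wagner.dominationNumberLE 3 ∧ ¬ wagner.dominationNumberLE 2) ∧
    ∀ F : Finset ({p : Sym2 (ZMod 8) // p ∈ wagner.edgeSet} ⊕ ZMod 8),
      F.card ≤ 3 →
      ∃ e, ∀ f ∈ F, ¬ ∃ v : ZMod 8 ⊕ ZMod 8,
        v ∈ wagnerPendant.inc e ∧ v ∈ wagnerPendant.inc f := by
  constructor
  · constructor
    · refine ⟨{0, 1, 2}, by decide, ?_⟩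
      have h : ∀ v : ZMod 8, v ∈ ({0,1,2} : Finset (ZMod 8)) ∨
          ∃ u ∈ ({0,1,2} : Finset (ZMod 8)), wagner.Adj u v := by decide
      exact fun v => h v
    · rintro ⟨X, hc, hd⟩
      have h : ¬ ∃ X : Finset (ZMod 8), X.card ≤ 2 ∧
          ∀ v, v ∈ X ∨ ∃ u ∈ X, wagner.Adj u v := by
        set_option maxRecDepth 40000 in decide
      exact h ⟨X, hc, fun v => hd v⟩
  · intro F hF
    classical
    set t : ({p : Sym2 (ZMod 8) // p ∈ wagner.edgeSet} ⊕ ZMod 8) → Finset (ZMod 8) :=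
      fun f => Finset.univ.filter fun i =>
        Sum.inl i ∈ wagnerPendant.inc f ∨ Sum.inr i ∈ wagnerPendant.inc f with ht
    have hcard : ∀ f, (t f).card ≤ 2 := by
      rintro (⟨p, hp⟩ | j)
      · induction p using Sym2.ind with
        | _ a b =>
          have hsub : t (Sum.inl ⟨s(a, b), hp⟩) ⊆ {a, b} := by
            intro i hi
            simp only [ht, Finset.mem_filter, wagnerPendant, Sym2.map_pair_eq,
              Sym2.mem_iff, Sum.inl.injEq, reduceCtorEq, or_false, false_or] at hi
            simp only [Finset.mem_insert, Finset.mem_singleton]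
            tauto
          calc (t (Sum.inl ⟨s(a, b), hp⟩)).card ≤ ({a, b} : Finset (ZMod 8)).card :=
                Finset.card_le_card hsub
            _ ≤ 2 := Finset.card_insert_le a {b} |>.trans (by simp)
      · have hsub : t (Sum.inr j) ⊆ {j} := by
          intro i hi
          simp only [ht, Finset.mem_filter, wagnerPendant, Sym2.mem_iff,
            Sum.inl.injEq, Sum.inr.injEq, reduceCtorEq, or_false, false_or] at hi
          simp only [Finset.mem_singleton]
          tauto
        calc (t (Sum.inr j)).card ≤ ({j} : Finset (ZMod 8)).card :=
              Finset.card_le_card hsub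
          _ ≤ 2 := by simp
    set S : Finset (ZMod 8) := F.biUnion t with hS
    have hScard : S.card ≤ 6 := by
      calc S.card ≤ F.card * 2 :=
            Finset.card_biUnion_le_card_mul F t 2 (fun f _ => hcard f)
        _ ≤ 6 := by omega
    have hex : ∃ i : ZMod 8, i ∉ S := by
      by_contra hc
      push_neg at hc
      have hsub : (Finset.univ : Finset (ZMod 8)) ⊆ S := fun i _ => hc i
      have := Finset.card_le_card hsub
      simp [Finset.card_univ] at this
      omega
    obtain ⟨i, hi⟩ := hex
    refine ⟨Sum.inr i, ?_⟩
    rintro f hf ⟨v, hv1, hv2⟩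
    apply hi
    rw [hS]
    apply Finset.mem_biUnion.mpr ⟨f, hf, ?_⟩
    simp only [ht, Finset.mem_filter, Finset.mem_univ, true_and]
    have : v = Sum.inl i ∨ v = Sum.inr i := by
      simpa [wagnerPendant, Sym2.mem_iff] using hv1
    rcases this with rfl | rfl
    · exact Or.inl hv2
    · exact Or.inr hv2
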